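/- arXiv:1209.3898 — 2 statements merged into one kernel-verified Lean document; each statement's English description precedes it below -/
import Mathlib

section
/- Let d, D, L be positive integers. Let A₁,…,A_d be D×D complex matrices with ∑_i A_i A_i† = 𝟙, and let Λ be a D×D positive semidefinite matrix with tr Λ = 1 and ∑_i A_i† Λ A_i = Λ. Let P be an orthogonal projection with PΛ = ΛP; set Λ̃ = PΛP and δ = tr(Λ − Λ̃). Let ρ_A^L be the d^L×d^L matrix with entries (ρ_A^L)_{(i₁…i_L),(j₁…j_L)} = tr(A_{j_L}†⋯A_{j_1}† Λ A_{i_1}⋯A_{i_L}) and σ_A the d^L×d^L matrix with entries tr(A_{j_L}†⋯A_{j_1}† Λ̃ A_{i_1}⋯A_{i_L}). Then ρ_A^L − σ_A is positive semidefinite and ‖ρ_A^L − σ_A‖₁ = δ. -/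
open Matrix ComplexOrder

/-- The trace norm (sum of singular values) of a complex square matrix, defined as the
trace of the positive semidefinite square root of `Mᴴ * M`. -/
noncomputable def traceNorm {n : Type*} [Fintype n] [DecidableEq n]
    (M : Matrix n n ℂ) : ℝ :=
  (((Matrix.posSemidef_conjTranspose_mul_self M).1.eigenvectorUnitary : Matrix n n ℂ) *
    diagonal (((↑) : ℝ → ℂ) ∘ Real.sqrt ∘ (Matrix.posSemidef_conjTranspose_mul_self M).1.eigenvalues) *
    (star (Matrix.posSemidef_conjTranspose_mul_self M).1.eigenvectorUnitary : Matrix n n ℂ)).trace.re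


/-- The `d^L × d^L` matrix with entries
`tr (A_{j_L}ᴴ ⋯ A_{j_1}ᴴ * Λ * A_{i_1} ⋯ A_{i_L})`, indexed by multi-indices:
the (unnormalized) `L`-site reduced density matrix of the MPS generated by `A`
with boundary matrix `Λ`. -/
noncomputable def reducedDM (d D L : ℕ) (A : Fin d → Matrix (Fin D) (Fin D) ℂ)
    (Λ : Matrix (Fin D) (Fin D) ℂ) :
    Matrix (Fin L → Fin d) (Fin L → Fin d) ℂ :=
  fun i j =>
    (((List.ofFn fun t => A (j t)).prod)ᴴ * Λ * (List.ofFn fun t => A (i t)).prod).trace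

lemma psd_trace_nonneg {n : Type*} [Fintype n] [DecidableEq n]
    {M : Matrix n n ℂ} (hM : M.PosSemidef) : 0 ≤ M.trace := by
  exact hM.trace_nonneg

open scoped MatrixOrder in
lemma traceNorm_sqrt_eq {n : Type*} [Fintype n] [DecidableEq n]
    {M : Matrix n n ℂ} (hM : M.PosSemidef) :
    (((Matrix.posSemidef_conjTranspose_mul_self M).1.eigenvectorUnitary : Matrix n n ℂ) *
    diagonal (((↑) : ℝ → ℂ) ∘ Real.sqrt ∘ (Matrix.posSemidef_conjTranspose_mul_self M).1.eigenvalues) *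
    (star (Matrix.posSemidef_conjTranspose_mul_self M).1.eigenvectorUnitary : Matrix n n ℂ)) = M := by
  have h1 := (Matrix.posSemidef_conjTranspose_mul_self M).1.cfc_eq Real.sqrt
  calc _ = cfc Real.sqrt (Mᴴ * M) := by
        rw [h1, IsHermitian.cfc, Unitary.conjStarAlgAut_apply]; rfl
    _ = M := by
      rw [← cfcₙ_eq_cfc (hf0 := Real.sqrt_zero), ← CFC.sqrt_eq_real_sqrt _ (Matrix.posSemidef_conjTranspose_mul_self M).nonneg,
        hM.isHermitian.eq, CFC.sqrt_mul_self M hM.nonneg]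

lemma reducedDM_sub (d D L : ℕ) (A : Fin d → Matrix (Fin D) (Fin D) ℂ)
    (Λ Μ : Matrix (Fin D) (Fin D) ℂ) :
    reducedDM d D L A Λ - reducedDM d D L A Μ = reducedDM d D L A (Λ - Μ) := by
  ext i j
  simp [reducedDM, Matrix.sub_mul, Matrix.mul_sub, Matrix.trace_sub]

lemma reducedDM_posSemidef (d D L : ℕ) (A : Fin d → Matrix (Fin D) (Fin D) ℂ)
    {M : Matrix (Fin D) (Fin D) ℂ} (hM : M.PosSemidef) :
    (reducedDM d D L A M).PosSemidef := by
  set B : (Fin L → Fin d) → Matrix (Fin D) (Fin D) ℂ :=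
    fun i => (List.ofFn fun t => A (i t)).prod with hB
  have hred : reducedDM d D L A M = fun i j => ((B j)ᴴ * M * B i).trace := rfl
  rw [posSemidef_iff_dotProduct_mulVec]
  constructor
  · ext i j
    simp only [Matrix.conjTranspose_apply]
    simp only [hred]
    rw [← Matrix.trace_conjTranspose]
    simp [Matrix.conjTranspose_mul, Matrix.mul_assoc, hM.isHermitian.eq]
  · intro x
    set X : Matrix (Fin D) (Fin D) ℂ := ∑ i, star (x i) • B i with hX
    have key : star x ⬝ᵥ (reducedDM d D L A M) *ᵥ x = (Xᴴ * M * X).trace := by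
      simp only [hX, Matrix.conjTranspose_sum, Matrix.conjTranspose_smul, star_star,
        Matrix.sum_mul, Matrix.mul_sum, Matrix.smul_mul, Matrix.mul_smul,
        Matrix.trace_sum, Matrix.trace_smul, dotProduct, Matrix.mulVec, hred,
        smul_eq_mul, smul_smul, Pi.star_apply]
      refine Finset.sum_congr rfl fun j _ => ?_
      rw [Finset.mul_sum, Finset.mul_sum]
      refine Finset.sum_congr rfl fun i _ => ?_
      ring
    rw [key]
    exact psd_trace_nonneg (hM.conjTranspose_mul_mul_same X)

lemma sum_prod_mul_conjTranspose (d D : ℕ) (A : Fin d → Matrix (Fin D) (Fin D) ℂ)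
    (hA : ∑ i, A i * (A i)ᴴ = 1) (L : ℕ) :
    ∑ i : Fin L → Fin d,
      (List.ofFn fun t => A (i t)).prod * ((List.ofFn fun t => A (i t)).prod)ᴴ = 1 := by
  induction L with
  | zero => simp
  | succ n ih =>
    rw [← (Fin.consEquiv fun _ : Fin (n + 1) => Fin d).sum_comp]
    rw [Fintype.sum_prod_type]
    have : ∀ (a : Fin d) (g : Fin n → Fin d),
        (List.ofFn fun t : Fin (n + 1) => A ((Fin.consEquiv fun _ : Fin (n + 1) => Fin d) (a, g) t)).prod
          = A a * (List.ofFn fun t => A (g t)).prod := by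
      intro a g
      rw [List.ofFn_succ]
      simp [Fin.consEquiv]
    simp only [this]
    calc (∑ a : Fin d, ∑ g : Fin n → Fin d,
          (A a * (List.ofFn fun t => A (g t)).prod) *
            (A a * (List.ofFn fun t => A (g t)).prod)ᴴ)
        = ∑ a : Fin d, A a * (∑ g : Fin n → Fin d,
            (List.ofFn fun t => A (g t)).prod * ((List.ofFn fun t => A (g t)).prod)ᴴ)
            * (A a)ᴴ := by
          refine Finset.sum_congr rfl fun a _ => ?_
          rw [Finset.mul_sum, Finset.sum_mul]
          refine Finset.sum_congr rfl fun g _ => ?_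
          simp only [Matrix.conjTranspose_mul]
          noncomm_ring
      _ = 1 := by rw [ih]; simpa using hA

lemma reducedDM_trace (d D L : ℕ) (A : Fin d → Matrix (Fin D) (Fin D) ℂ)
    (hA : ∑ i, A i * (A i)ᴴ = 1) (M : Matrix (Fin D) (Fin D) ℂ) :
    (reducedDM d D L A M).trace = M.trace := by
  have : (reducedDM d D L A M).trace
      = ((∑ i : Fin L → Fin d, (List.ofFn fun t => A (i t)).prod *
          ((List.ofFn fun t => A (i t)).prod)ᴴ) * M).trace := by
    rw [Matrix.trace, Finset.sum_mul, Matrix.trace_sum]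
    refine Finset.sum_congr rfl fun i _ => ?_
    simp only [Matrix.diag_apply, reducedDM]
    rw [Matrix.trace_mul_cycle]
  rw [this, sum_prod_mul_conjTranspose d D A hA L, Matrix.one_mul]

/-- `ρ_A^L − σ_A` is positive semidefinite and `‖ρ_A^L − σ_A‖₁ = δ`,
where `σ_A` is the reduced density matrix built from `Λ̃ = PΛP` and `δ = tr(Λ − Λ̃)`. -/
theorem reducedDM_projected_boundary_difference
    (d D L : ℕ) (hd : 0 < d) (hD : 0 < D) (hL : 0 < L)
    (A : Fin d → Matrix (Fin D) (Fin D) ℂ)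
    (Λ : Matrix (Fin D) (Fin D) ℂ) (hΛ : Λ.PosSemidef) (htr : Λ.trace = 1)
    (hA : ∑ i, A i * (A i)ᴴ = 1)
    (hfix : ∑ i, (A i)ᴴ * Λ * A i = Λ)
    (P : Matrix (Fin D) (Fin D) ℂ)
    (hP : Pᴴ = P) (hP2 : P * P = P) (hPΛ : P * Λ = Λ * P) :
    (reducedDM d D L A Λ - reducedDM d D L A (P * Λ * P)).PosSemidef ∧
    traceNorm (reducedDM d D L A Λ - reducedDM d D L A (P * Λ * P)) =
      (Λ - P * Λ * P).trace.re := by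
  have hQsand : (1 - P)ᴴ * Λ * (1 - P) = Λ - P * Λ * P := by
    rw [Matrix.conjTranspose_sub, hP, Matrix.conjTranspose_one]
    have hPΛP : P * Λ * P = P * Λ := by
      rw [hPΛ, Matrix.mul_assoc, hP2]
    have hΛP : Λ * P = P * Λ := hPΛ.symm
    simp only [Matrix.sub_mul, Matrix.mul_sub, Matrix.one_mul, Matrix.mul_one]
    rw [hPΛP, hΛP]
    abel
  have hdiffPSD : (Λ - P * Λ * P).PosSemidef := by
    rw [← hQsand]; exact hΛ.conjTranspose_mul_mul_same (1 - P)
  have hsub := reducedDM_sub d D L A Λ (P * Λ * P)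
  have hΔ : (reducedDM d D L A Λ - reducedDM d D L A (P * Λ * P)).PosSemidef := by
    rw [hsub]; exact reducedDM_posSemidef d D L A hdiffPSD
  refine ⟨hΔ, ?_⟩
  have hsqrt := traceNorm_sqrt_eq hΔ
  rw [traceNorm, hsqrt, hsub, reducedDM_trace d D L A hA]
end

section
/- Let d, D, L be positive integers. Let A₁,…,A_d be D×D complex matrices with ∑_i A_i A_i† = 𝟙, and let Λ be a D×D positive semidefinite matrix with tr Λ = 1 and ∑_i A_i† Λ A_i = Λ. Let P be an orthogonal projection with PΛ = ΛP; set Λ̃ = PΛP and δ = tr(Λ − Λ̃). Let σ_A be the d^L×d^L matrix with entries (σ_A)_{(i₁…i_L),(j₁…j_L)} = tr(A_{j_L}†⋯A_{j_1}† Λ̃ A_{i_1}⋯A_{i_L}) and σ_{A,P} the d^L×d^L matrix with entries tr(P A_{j_L}†⋯A_{j_1}† Λ̃ A_{i_1}⋯A_{i_L} P). Then ‖σ_A − σ_{A,P}‖₁ ≤ 2δ. -/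
open Matrix ComplexOrder

/-- The `d^L × d^L` matrix `σ_A` with entries
`tr (A_{j_L}ᴴ ⋯ A_{j_1}ᴴ * Λ̃ * A_{i_1} ⋯ A_{i_L})`. -/
noncomputable def sigmaA (d D L : ℕ) (A : Fin d → Matrix (Fin D) (Fin D) ℂ)
    (Λt : Matrix (Fin D) (Fin D) ℂ) :
    Matrix (Fin L → Fin d) (Fin L → Fin d) ℂ :=
  fun i j =>
    (((List.ofFn fun t => A (j t)).prod)ᴴ * Λt * (List.ofFn fun t => A (i t)).prod).trace

/-- The `d^L × d^L` matrix `σ_{A,P}` with entries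
`tr (P * A_{j_L}ᴴ ⋯ A_{j_1}ᴴ * Λ̃ * A_{i_1} ⋯ A_{i_L} * P)`. -/
noncomputable def sigmaAP (d D L : ℕ) (A : Fin d → Matrix (Fin D) (Fin D) ℂ)
    (Λt P : Matrix (Fin D) (Fin D) ℂ) :
    Matrix (Fin L → Fin d) (Fin L → Fin d) ℂ :=
  fun i j =>
    (P * ((List.ofFn fun t => A (j t)).prod)ᴴ * Λt * (List.ofFn fun t => A (i t)).prod
      * P).trace

lemma psd_trace_re_nonneg {n : Type*} [Fintype n] [DecidableEq n]
    {M : Matrix n n ℂ} (hM : M.PosSemidef) : 0 ≤ M.trace.re := by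
  have h : ∀ i, 0 ≤ M i i := by
    intro i
    exact hM.diag_nonneg
  have : (0:ℝ) ≤ ∑ i, (M i i).re := by
    refine Finset.sum_nonneg fun i _ => ?_
    exact (Complex.le_def.mp (h i)).1
  simpa [Matrix.trace, Matrix.diag, Complex.re_sum] using this

noncomputable def chanPow (d D : ℕ) (A : Fin d → Matrix (Fin D) (Fin D) ℂ) (L : ℕ)
    (X : Matrix (Fin D) (Fin D) ℂ) : Matrix (Fin D) (Fin D) ℂ :=
  ∑ i : Fin L → Fin d,
    ((List.ofFn fun t => A (i t)).prod)ᴴ * X * (List.ofFn fun t => A (i t)).prod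

lemma chanPow_zero (d D : ℕ) (A : Fin d → Matrix (Fin D) (Fin D) ℂ)
    (X : Matrix (Fin D) (Fin D) ℂ) : chanPow d D A 0 X = X := by
  simp [chanPow]

lemma chanPow_succ (d D : ℕ) (A : Fin d → Matrix (Fin D) (Fin D) ℂ) (L : ℕ)
    (X : Matrix (Fin D) (Fin D) ℂ) :
    chanPow d D A (L+1) X = chanPow d D A L (∑ k, (A k)ᴴ * X * A k) := by
  have key := Fintype.sum_equiv (Fin.consEquiv (fun _ : Fin (L+1) => Fin d))
    (fun p : Fin d × (Fin L → Fin d) =>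
      ((List.ofFn fun t => A (p.2 t)).prod)ᴴ * ((A p.1)ᴴ * X * A p.1) *
        (List.ofFn fun t => A (p.2 t)).prod)
    (fun i => ((List.ofFn fun t => A (i t)).prod)ᴴ * X * (List.ofFn fun t => A (i t)).prod)
    (by
      intro p
      simp only [Fin.consEquiv_apply, List.ofFn_succ, Fin.cons_zero, Fin.cons_succ,
        List.prod_cons, Matrix.conjTranspose_mul]
      noncomm_ring)
  rw [chanPow, ← key, Fintype.sum_prod_type, chanPow, Finset.sum_comm]
  refine Finset.sum_congr rfl fun t _ => ?_
  rw [Finset.mul_sum, Finset.sum_mul]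

lemma chanPow_le (d D : ℕ) (A : Fin d → Matrix (Fin D) (Fin D) ℂ)
    (Λ : Matrix (Fin D) (Fin D) ℂ) (hfix : ∑ k, (A k)ᴴ * Λ * A k = Λ) :
    ∀ (L : ℕ) (X : Matrix (Fin D) (Fin D) ℂ),
      (Λ - X).PosSemidef → (Λ - chanPow d D A L X).PosSemidef := by
  intro L
  induction L with
  | zero => intro X h; simpa [chanPow_zero] using h
  | succ L ih =>
    intro X h
    rw [chanPow_succ]
    apply ih
    have heq : Λ - ∑ k, (A k)ᴴ * X * A k = ∑ k, (A k)ᴴ * (Λ - X) * A k := by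
      simp [Matrix.mul_sub, Matrix.sub_mul, Finset.sum_sub_distrib, hfix]
    rw [heq]
    refine Finset.sum_induction _ _ (fun a b ha hb => ha.add hb) Matrix.PosSemidef.zero
      (fun k _ => h.conjTranspose_mul_mul_same (A k))

lemma traceNorm_posSemidef {n : Type*} [Fintype n] [DecidableEq n]
    {M : Matrix n n ℂ} (hM : M.PosSemidef) : traceNorm M = M.trace.re := by
  open scoped MatrixOrder in
  have hH := (Matrix.posSemidef_conjTranspose_mul_self M).1
  open scoped MatrixOrder in
  have h : hH.cfc Real.sqrt = M := by
    rw [← hH.cfc_eq, ← cfcₙ_eq_cfc, ← CFC.sqrt_eq_real_sqrt _ (Matrix.posSemidef_conjTranspose_mul_self M).nonneg,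
      hM.1.eq, CFC.sqrt_mul_self M hM.nonneg]
  rw [traceNorm]
  conv_rhs => rw [← h, IsHermitian.cfc, Unitary.conjStarAlgAut_apply]
  rfl

lemma trace_proj_sandwich {n : Type*} [Fintype n] [DecidableEq n]
    (P X : Matrix n n ℂ) (hP2 : P * P = P) : (P * X * P).trace = (X * P).trace := by
  rw [Matrix.trace_mul_comm (P * X) P, ← mul_assoc, hP2, Matrix.trace_mul_comm]

/-- `‖σ_A − σ_{A,P}‖₁ ≤ 2δ`, where `Λ̃ = PΛP` and `δ = tr(Λ − Λ̃)`. -/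
theorem sigmaA_close_to_sigmaAP
    (d D L : ℕ) (hd : 0 < d) (hD : 0 < D) (hL : 0 < L)
    (A : Fin d → Matrix (Fin D) (Fin D) ℂ)
    (Λ : Matrix (Fin D) (Fin D) ℂ) (hΛ : Λ.PosSemidef) (htr : Λ.trace = 1)
    (hA : ∑ i, A i * (A i)ᴴ = 1)
    (hfix : ∑ i, (A i)ᴴ * Λ * A i = Λ)
    (P : Matrix (Fin D) (Fin D) ℂ)
    (hP : Pᴴ = P) (hP2 : P * P = P) (hPΛ : P * Λ = Λ * P) :
    traceNorm (sigmaA d D L A (P * Λ * P) - sigmaAP d D L A (P * Λ * P) P) ≤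
      2 * (Λ - P * Λ * P).trace.re := by
  classical
  set Λt := P * Λ * P with hΛtdef
  set Q : Matrix (Fin D) (Fin D) ℂ := 1 - P with hQdef
  have hQ : Qᴴ = Q := by
    simp [hQdef, Matrix.conjTranspose_sub, hP]
  have hQ2 : Q * Q = Q := by
    have h : (1 - P) * (1 - P) = 1 - P - P + P * P := by noncomm_ring
    rw [hQdef, h, hP2]; abel
  have hPΛP : P * Λ * P = Λ * P := by rw [hPΛ, mul_assoc, hP2]
  have hΛt : Λt.PosSemidef := by
    have := hΛ.mul_mul_conjTranspose_same P
    rwa [hP] at this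
  have hkey : Qᴴ * Λ * Q = Λ - Λt := by
    rw [hQ, hQdef]
    have h1 : (1 - P) * Λ * (1 - P) = Λ - P * Λ - Λ * P + P * Λ * P := by noncomm_ring
    have h2 : Λ - P * Λ - Λ * P + P * Λ * P = Λ - P * Λ * P := by
      rw [hPΛP, hPΛ]; abel
    rw [h1, h2, ← hΛtdef]
  have hΛsub : (Λ - Λt).PosSemidef := by
    rw [← hkey]; exact hΛ.conjTranspose_mul_mul_same Q
  obtain ⟨S, hS, hSS⟩ : ∃ S : Matrix (Fin D) (Fin D) ℂ, Sᴴ = S ∧ S * S = Λt :=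
    open scoped MatrixOrder in
    ⟨CFC.sqrt Λt, (CFC.sqrt_nonneg Λt).posSemidef.1, CFC.sqrt_mul_sqrt_self Λt hΛt.nonneg⟩
  set B : (Fin L → Fin d) → Matrix (Fin D) (Fin D) ℂ :=
    fun i => (List.ofFn fun t => A (i t)).prod with hBdef
  set Y : Matrix (Fin D × Fin D) (Fin L → Fin d) ℂ :=
    fun p i => star ((S * B i * Q) p.1 p.2) with hYdef
  set M := sigmaA d D L A Λt - sigmaAP d D L A Λt P with hMdef
  -- entry identity
  have hentry : ∀ i j, M i j = (Q * ((B j)ᴴ * Λt * B i) * Q).trace := by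
    intro i j
    have h1 : M i j = ((B j)ᴴ * Λt * B i).trace - (((B j)ᴴ * Λt * B i) * P).trace := by
      have e1 : P * (B j)ᴴ * Λt * B i * P = P * ((B j)ᴴ * Λt * B i) * P := by
        noncomm_ring
      have e2 : (B j)ᴴ * Λt * B i = ((B j)ᴴ * Λt) * B i := by noncomm_ring
      rw [hMdef]
      simp only [Matrix.sub_apply, sigmaA, sigmaAP, ← hBdef]
      rw [e1, trace_proj_sandwich P _ hP2]
    have h2 : (Q * ((B j)ᴴ * Λt * B i) * Q).trace = (((B j)ᴴ * Λt * B i) * Q).trace :=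
      trace_proj_sandwich Q _ hQ2
    rw [h1, h2, hQdef, Matrix.mul_sub, Matrix.mul_one, Matrix.trace_sub]
  have hgram : ∀ i j, M i j = ((S * B j * Q)ᴴ * (S * B i * Q)).trace := by
    intro i j
    rw [hentry i j]
    congr 1
    simp only [Matrix.conjTranspose_mul, hQ, hS]
    rw [← hSS]
    noncomm_ring
  -- M = Yᴴ Y
  have hMY : M = Yᴴ * Y := by
    ext i j
    rw [hgram i j, Matrix.mul_apply (M := Yᴴ)]
    simp only [Matrix.conjTranspose_apply (M := Y)]
    simp only [Matrix.mul_apply, Matrix.conjTranspose_apply, Matrix.trace, Matrix.diag,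
      hYdef, star_star]
    rw [Fintype.sum_prod_type, Finset.sum_comm]
    exact Finset.sum_congr rfl fun a _ => Finset.sum_congr rfl fun b _ => by ring
  have hMpsd : M.PosSemidef := by rw [hMY]; exact Matrix.posSemidef_conjTranspose_mul_self Y
  -- trace of M
  have htraceM : M.trace = (Q * chanPow d D A L Λt * Q).trace := by
    have h : M.trace = ∑ i, (Q * ((B i)ᴴ * Λt * B i) * Q).trace := by
      rw [Matrix.trace]
      exact Finset.sum_congr rfl fun i _ => hentry i i
    rw [h, chanPow, Finset.mul_sum, Finset.sum_mul, Matrix.trace_sum]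
  have hchain : (Λ - chanPow d D A L Λt).PosSemidef :=
    chanPow_le d D A Λ hfix L Λt hΛsub
  have hQchain : (Q * (Λ - chanPow d D A L Λt) * Q).PosSemidef := by
    have := hchain.conjTranspose_mul_mul_same Q
    rwa [hQ] at this
  have hsplit : (Q * Λ * Q).trace
      = (Q * (Λ - chanPow d D A L Λt) * Q).trace + (Q * chanPow d D A L Λt * Q).trace := by
    have h : Q * Λ * Q = Q * (Λ - chanPow d D A L Λt) * Q + Q * chanPow d D A L Λt * Q := by
      noncomm_ring
    rw [h, Matrix.trace_add]
  have hQΛQ : (Q * Λ * Q).trace = (Λ - Λt).trace := by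
    rw [← hkey, hQ]
  have hMle : M.trace.re ≤ (Λ - Λt).trace.re := by
    have h0 := psd_trace_re_nonneg hQchain
    have h1 : (Λ - Λt).trace.re
        = (Q * (Λ - chanPow d D A L Λt) * Q).trace.re + (Q * chanPow d D A L Λt * Q).trace.re := by
      rw [← hQΛQ, hsplit, Complex.add_re]
    rw [htraceM]
    linarith
  have hδ : 0 ≤ (Λ - Λt).trace.re := psd_trace_re_nonneg hΛsub
  calc traceNorm M = M.trace.re := traceNorm_posSemidef hMpsd
    _ ≤ (Λ - Λt).trace.re := hMle
    _ ≤ 2 * (Λ - Λt).trace.re := by linarith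
end
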